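/- arXiv:1902.09695 — 2 statements merged into one kernel-verified Lean document; each statement's English description precedes it below -/
import Mathlib

section
/- Let P ∈ ℝ^{m×m} be symmetric, stochastic, and positive semi-definite, and let Q = I_m − P. Then for all u₁,…,u_m ∈ ℝⁿ, ‖(Q ⊗ I_n)u‖₂² ≤ Σ_{i,j} P_{ij} ‖(Σ_k P_{ik} u_k) − u_j‖₂², where u ∈ ℝ^{mn} is the stacked vector of the u_i. -/
/-- Laplacian-type bound: for a symmetric nonnegative row-stochastic matrix,
the quadratic form is bounded by the sum of squares. -/
lemma kron_aux_claimA {m : ℕ} (P : Matrix (Fin m) (Fin m) ℝ)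
    (hsym : P.IsSymm) (hnn : ∀ i j, 0 ≤ P i j)
    (hrow : ∀ i, ∑ j, P i j = 1) (y : Fin m → ℝ) :
    ∑ i, ∑ j, P i j * (y i * y j) ≤ ∑ i, y i ^ 2 := by
  have hcol : ∀ j, ∑ i, P i j = 1 := by
    intro j
    have h : ∀ i, P i j = P j i := fun i => by
      conv_lhs => rw [← hsym]
      rfl
    simp_rw [h]; exact hrow j
  have key : 0 ≤ ∑ i, ∑ j, P i j * (y i - y j) ^ 2 :=
    Finset.sum_nonneg fun i _ => Finset.sum_nonneg fun j _ =>
      mul_nonneg (hnn i j) (sq_nonneg _)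
  have expand : ∑ i, ∑ j, P i j * (y i - y j) ^ 2
      = (∑ i, ∑ j, P i j * y i ^ 2) - 2 * (∑ i, ∑ j, P i j * (y i * y j))
        + ∑ i, ∑ j, P i j * y j ^ 2 := by
    have h : ∀ i : Fin m, ∀ j : Fin m, P i j * (y i - y j) ^ 2
        = P i j * y i ^ 2 - 2 * (P i j * (y i * y j)) + P i j * y j ^ 2 := by
      intro i j; ring
    simp_rw [h, Finset.sum_add_distrib, Finset.sum_sub_distrib, ← Finset.mul_sum]
  have h1 : ∑ i, ∑ j, P i j * y i ^ 2 = ∑ i, y i ^ 2 := by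
    have h : ∀ i : Fin m, ∑ j, P i j * y i ^ 2 = y i ^ 2 := by
      intro i
      rw [← Finset.sum_mul, hrow i, one_mul]
    simp_rw [h]
  have h2 : ∑ i, ∑ j, P i j * y j ^ 2 = ∑ j, y j ^ 2 := by
    rw [Finset.sum_comm]
    have h : ∀ j : Fin m, ∑ i, P i j * y j ^ 2 = y j ^ 2 := by
      intro j
      rw [← Finset.sum_mul, hcol j, one_mul]
    simp_rw [h]
  nlinarith [key, expand, h1, h2]

open scoped MatrixOrder in
/-- `P ⪰ P²` for a symmetric stochastic PSD matrix, in quadratic-form form. -/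
lemma kron_aux_claimB {m : ℕ} (P : Matrix (Fin m) (Fin m) ℝ)
    (hsym : P.IsSymm) (hnn : ∀ i j, 0 ≤ P i j)
    (hrow : ∀ i, ∑ j, P i j = 1) (hpsd : P.PosSemidef) (x : Fin m → ℝ) :
    ∑ i, (∑ k, P i k * x k) ^ 2 ≤ ∑ i, (∑ k, P i k * x k) * x i := by
  set S := CFC.sqrt P with hSdef
  have hSS : S * S = P := CFC.sqrt_mul_sqrt_self P hpsd.nonneg
  have hSsym : ∀ i j, S i j = S j i := by
    intro i j
    have := (Matrix.nonneg_iff_posSemidef.mp (CFC.sqrt_nonneg P)).1.apply j i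
    simpa using this
  set y : Fin m → ℝ := fun j => ∑ k, S j k * x k with hy
  have hP : ∀ i k, P i k = ∑ l, S i l * S l k := by
    intro i k
    rw [← hSS]
    rfl
  have hPx : ∀ i, (∑ k, P i k * x k) = ∑ l, S i l * y l := by
    intro i
    simp_rw [hP, Finset.sum_mul, hy]
    rw [Finset.sum_comm]
    congr 1; ext l
    rw [Finset.mul_sum]
    congr 1; ext k; ring
  have hRHS : ∑ i, (∑ k, P i k * x k) * x i = ∑ l, y l ^ 2 := by
    simp_rw [hPx, Finset.sum_mul]
    rw [Finset.sum_comm]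
    congr 1; ext l
    rw [hy, sq, Finset.sum_mul]
    congr 1; ext i
    rw [hSsym i l]; ring
  have hLHS : ∑ i, (∑ k, P i k * x k) ^ 2 = ∑ l, ∑ k, P l k * (y l * y k) := by
    simp_rw [hPx, sq, Finset.sum_mul_sum]
    rw [Finset.sum_comm]
    congr 1; ext l
    rw [Finset.sum_comm]
    congr 1; ext k
    rw [hP, Finset.sum_mul]
    congr 1; ext i
    rw [hSsym l i]; ring
  rw [hRHS, hLHS]
  exact kron_aux_claimA P hsym hnn hrow y

/-- The scalar version of the main inequality. -/
lemma kron_aux_claimC {m : ℕ} (P : Matrix (Fin m) (Fin m) ℝ)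
    (hsym : P.IsSymm) (hnn : ∀ i j, 0 ≤ P i j)
    (hrow : ∀ i, ∑ j, P i j = 1) (hpsd : P.PosSemidef) (x : Fin m → ℝ) :
    ∑ i, (x i - ∑ j, P i j * x j) ^ 2 ≤
      ∑ i, ∑ j, P i j * ((∑ k, P i k * x k) - x j) ^ 2 := by
  have hcol : ∀ j, ∑ i, P i j = 1 := by
    intro j
    have h : ∀ i, P i j = P j i := fun i => by
      conv_lhs => rw [← hsym]
      rfl
    simp_rw [h]; exact hrow j
  have hper : ∀ i, ∑ j, P i j * ((∑ k, P i k * x k) - x j) ^ 2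
      = (∑ j, P i j * x j ^ 2) - (∑ k, P i k * x k) ^ 2 := by
    intro i
    set s := ∑ k, P i k * x k with hs
    have expand : ∀ j : Fin m, P i j * (s - x j) ^ 2
        = s ^ 2 * P i j - (2 * s) * (P i j * x j) + P i j * x j ^ 2 := fun j => by ring
    rw [Finset.sum_congr rfl fun j _ => expand j]
    rw [Finset.sum_add_distrib, Finset.sum_sub_distrib, ← Finset.mul_sum, ← Finset.mul_sum,
      hrow i, ← hs]
    ring
  have hsum : ∑ i, ∑ j, P i j * x j ^ 2 = ∑ j, x j ^ 2 := by
    rw [Finset.sum_comm]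
    have h : ∀ j : Fin m, ∑ i, P i j * x j ^ 2 = x j ^ 2 := by
      intro j; rw [← Finset.sum_mul, hcol j, one_mul]
    simp_rw [h]
  have hB := kron_aux_claimB P hsym hnn hrow hpsd x
  have hL : ∑ i, (x i - ∑ j, P i j * x j) ^ 2
      = (∑ i, x i ^ 2) - 2 * (∑ i, (∑ k, P i k * x k) * x i)
        + ∑ i, (∑ k, P i k * x k) ^ 2 := by
    have expand : ∀ i : Fin m, (x i - ∑ j, P i j * x j) ^ 2
        = x i ^ 2 - 2 * ((∑ k, P i k * x k) * x i) + (∑ k, P i k * x k) ^ 2 := fun i => by ring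
    rw [Finset.sum_congr rfl fun i _ => expand i]
    rw [Finset.sum_add_distrib, Finset.sum_sub_distrib, ← Finset.mul_sum]
  have hR : ∑ i, ∑ j, P i j * ((∑ k, P i k * x k) - x j) ^ 2
      = (∑ j, x j ^ 2) - ∑ i, (∑ k, P i k * x k) ^ 2 := by
    rw [Finset.sum_congr rfl fun i _ => hper i, Finset.sum_sub_distrib, hsum]
  rw [hL, hR]
  linarith

/-- Coordinates of a linear combination in `EuclideanSpace`. -/
lemma kron_aux_sum_smul_apply {m n : ℕ} (a : Fin m → ℝ)
    (u : Fin m → EuclideanSpace ℝ (Fin n)) (c : Fin n) :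
    (∑ j, a j • u j) c = ∑ j, a j * u j c := by
  induction (Finset.univ : Finset (Fin m)) using Finset.induction with
  | empty => rfl
  | insert a s h ih =>
    rw [Finset.sum_insert h, Finset.sum_insert h, ← ih]
    rfl

/-- For a symmetric stochastic PSD matrix `P` and `Q = I − P`, the squared
norm `‖(Q ⊗ Iₙ)u‖²` is bounded by the weighted variance
`∑ᵢⱼ Pᵢⱼ ‖(∑ₖ Pᵢₖ uₖ) − uⱼ‖²`. -/
theorem kron_residual_le_weighted_variance {m n : ℕ}
    (P : Matrix (Fin m) (Fin m) ℝ)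
    (hsym : P.IsSymm) (hnn : ∀ i j, 0 ≤ P i j)
    (hrow : ∀ i, ∑ j, P i j = 1) (hpsd : P.PosSemidef)
    (u : Fin m → EuclideanSpace ℝ (Fin n)) :
    ∑ i, ‖u i - ∑ j, P i j • u j‖ ^ 2 ≤
      ∑ i, ∑ j, P i j * ‖(∑ k, P i k • u k) - u j‖ ^ 2 := by
  have hnorm : ∀ w : EuclideanSpace ℝ (Fin n), ‖w‖ ^ 2 = ∑ c, (w c) ^ 2 := by
    intro w
    rw [EuclideanSpace.norm_eq, Real.sq_sqrt (Finset.sum_nonneg fun c _ => sq_nonneg _)]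
    simp [sq_abs]
  have key : ∀ (i : Fin m) (c : Fin n),
      (u i - ∑ j, P i j • u j) c = u i c - ∑ j, P i j * u j c := by
    intro i c
    rw [PiLp.sub_apply, kron_aux_sum_smul_apply]
  have key2 : ∀ (i j : Fin m) (c : Fin n),
      ((∑ k, P i k • u k) - u j) c = (∑ k, P i k * u k c) - u j c := by
    intro i j c
    rw [PiLp.sub_apply, kron_aux_sum_smul_apply]
  have hL : ∑ i, ‖u i - ∑ j, P i j • u j‖ ^ 2
      = ∑ c, ∑ i, (u i c - ∑ j, P i j * u j c) ^ 2 := by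
    simp_rw [hnorm, key]
    exact Finset.sum_comm
  have hR : ∑ i, ∑ j, P i j * ‖(∑ k, P i k • u k) - u j‖ ^ 2
      = ∑ c, ∑ i, ∑ j, P i j * ((∑ k, P i k * u k c) - u j c) ^ 2 := by
    simp_rw [hnorm, key2, Finset.mul_sum]
    rw [Finset.sum_congr rfl fun i _ => Finset.sum_comm, Finset.sum_comm]
  rw [hL, hR]
  exact Finset.sum_le_sum fun c _ =>
    kron_aux_claimC P hsym hnn hrow hpsd fun i => u i c
end

section
/- Let X ⊆ ℝⁿ be a closed convex set contained in the closure of a convex open set D, let φ : D → ℝ be differentiable and strictly convex, and let P ∈ ℝ^{m×m} be a symmetric stochastic matrix. Fix x₁,…,x_m ∈ X ∩ D and for each i let y_i = argmin_{y ∈ X ∩ D} Σ_j P_{ij} B_φ(y, x_j). Then for any u ∈ X ∩ D: Σ_i (B_φ(u, x_i) − B_φ(u, y_i)) ≥ Σ_{i,j} P_{ij} B_φ(y_i, x_j). -/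
open RealInnerProductSpace

/-- Bregman divergence of `φ` with gradient map `gφ`. -/
noncomputable def bregman {n : ℕ} (φ : EuclideanSpace ℝ (Fin n) → ℝ)
    (gφ : EuclideanSpace ℝ (Fin n) → EuclideanSpace ℝ (Fin n))
    (u v : EuclideanSpace ℝ (Fin n)) : ℝ :=
  φ u - φ v - ⟪gφ v, u - v⟫

/-- Right-hand derivative at a boundary minimum is nonnegative. -/
lemma deriv_nonneg_of_min_right {h : ℝ → ℝ} {d : ℝ} (hd : HasDerivAt h d 0)
    (hm : ∀ t ∈ Set.Ioc (0:ℝ) 1, h 0 ≤ h t) : 0 ≤ d := by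
  rw [hasDerivAt_iff_tendsto_slope] at hd
  have hd' : Filter.Tendsto (slope h 0) (nhdsWithin 0 (Set.Ioi 0)) (nhds d) :=
    hd.mono_left (nhdsWithin_mono 0 (fun t ht => ne_of_gt ht))
  refine ge_of_tendsto hd' ?_
  filter_upwards [Ioc_mem_nhdsGT_of_mem (Set.mem_Ico.mpr ⟨le_rfl, one_pos⟩)] with t ht
  have ht0 : (0:ℝ) < t := ht.1
  have : 0 ≤ h t - h 0 := sub_nonneg.mpr (hm t ht)
  rw [slope_def_field]
  exact div_nonneg this (by linarith)

/-- Generalized Pythagorean inequality for Bregman projections (mirror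
averaging step): summing over all nodes. -/
theorem bregman_mirror_averaging_sum {m n : ℕ}
    (D X : Set (EuclideanSpace ℝ (Fin n)))
    (hDconv : Convex ℝ D) (hDopen : IsOpen D)
    (hXconv : Convex ℝ X) (hXclosed : IsClosed X) (hXD : X ⊆ closure D)
    (φ : EuclideanSpace ℝ (Fin n) → ℝ)
    (gφ : EuclideanSpace ℝ (Fin n) → EuclideanSpace ℝ (Fin n))
    (hgrad : ∀ x ∈ D, HasGradientAt φ (gφ x) x)
    (hconv : StrictConvexOn ℝ D φ)
    (P : Matrix (Fin m) (Fin m) ℝ)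
    (hsym : P.IsSymm) (hnn : ∀ i j, 0 ≤ P i j) (hrow : ∀ i, ∑ j, P i j = 1)
    (x y : Fin m → EuclideanSpace ℝ (Fin n))
    (hx : ∀ i, x i ∈ X ∩ D) (hy : ∀ i, y i ∈ X ∩ D)
    (hmin : ∀ i, ∀ z ∈ X ∩ D,
      ∑ j, P i j * bregman φ gφ (y i) (x j) ≤
        ∑ j, P i j * bregman φ gφ z (x j)) :
    ∀ u ∈ X ∩ D,
      ∑ i, (bregman φ gφ u (x i) - bregman φ gφ u (y i)) ≥
        ∑ i, ∑ j, P i j * bregman φ gφ (y i) (x j) := by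
  intro u hu
  have hcol : ∀ j, ∑ i, P i j = 1 := by
    intro j
    calc ∑ i, P i j = ∑ i, P j i := by
          refine Finset.sum_congr rfl fun i _ => ?_
          exact congrFun (congrFun hsym j) i
      _ = 1 := hrow j
  -- first-order optimality condition
  have key : ∀ i, 0 ≤ ∑ j, P i j * (⟪gφ (y i), u - y i⟫ - ⟪gφ (x j), u - y i⟫) := by
    intro i
    set v := u - y i with hv
    set ℓ := ∑ j, P i j * ⟪gφ (x j), v⟫ with hℓ
    have hyD : y i ∈ D := (hy i).2
    -- derivative of t ↦ φ (y i + t • v) - t * ℓ at 0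
    have hcurve : HasDerivAt (fun t : ℝ => y i + t • v) v 0 := by
      simpa using (((hasDerivAt_id (0:ℝ)).smul_const v).const_add (y i))
    have hphi : HasDerivAt (fun t : ℝ => φ (y i + t • v)) ⟪gφ (y i), v⟫ 0 := by
      have h0 : y i + (0:ℝ) • v = y i := by simp
      have := (hgrad (y i) hyD).hasFDerivAt
      rw [← h0] at this
      have h2 := this.comp_hasDerivAt 0 hcurve
      simp [InnerProductSpace.toDual_apply_apply] at h2
      exact h2
    have hlin : HasDerivAt (fun t : ℝ => t * ℓ) ℓ 0 := by
      simpa using (hasDerivAt_id (0:ℝ)).mul_const ℓ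
    have hD : HasDerivAt (fun t : ℝ => φ (y i + t • v) - t * ℓ) (⟪gφ (y i), v⟫ - ℓ) 0 :=
      hphi.sub hlin
    -- minimum on the right
    have hm : ∀ t ∈ Set.Ioc (0:ℝ) 1,
        (fun t : ℝ => φ (y i + t • v) - t * ℓ) 0 ≤ (fun t : ℝ => φ (y i + t • v) - t * ℓ) t := by
      intro t ht
      have ht0 : (0:ℝ) ≤ t := le_of_lt ht.1
      have ht1 : t ≤ 1 := ht.2
      have hz : y i + t • v = (1 - t) • y i + t • u := by
        rw [hv]; module
      have hzX : y i + t • v ∈ X := by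
        rw [hz]
        exact hXconv (hy i).1 hu.1 (by linarith) ht0 (by ring)
      have hzD : y i + t • v ∈ D := by
        rw [hz]
        exact hDconv (hy i).2 hu.2 (by linarith) ht0 (by ring)
      have hmz := hmin i (y i + t • v) ⟨hzX, hzD⟩
      have hexp : ∀ j, bregman φ gφ (y i + t • v) (x j) - bregman φ gφ (y i) (x j)
          = φ (y i + t • v) - φ (y i) - t * ⟪gφ (x j), v⟫ := by
        intro j
        simp only [bregman, hv]
        rw [show y i + t • (u - y i) - x j = (y i - x j) + t • (u - y i) by abel,
          inner_add_right, real_inner_smul_right]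
        ring
      have hsum : ∑ j, P i j * (bregman φ gφ (y i + t • v) (x j) - bregman φ gφ (y i) (x j))
          = (φ (y i + t • v) - φ (y i)) - t * ℓ := by
        calc ∑ j, P i j * (bregman φ gφ (y i + t • v) (x j) - bregman φ gφ (y i) (x j))
            = ∑ j, (P i j * (φ (y i + t • v) - φ (y i)) - P i j * (t * ⟪gφ (x j), v⟫)) := by
              refine Finset.sum_congr rfl fun j _ => ?_
              rw [hexp j]; ring
          _ = (∑ j, P i j) * (φ (y i + t • v) - φ (y i)) - t * ∑ j, P i j * ⟪gφ (x j), v⟫ := by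
              rw [Finset.sum_sub_distrib, Finset.sum_mul, Finset.mul_sum]
              congr 1
              refine Finset.sum_congr rfl fun j _ => by ring
          _ = (φ (y i + t • v) - φ (y i)) - t * ℓ := by rw [hrow i, one_mul, hℓ]
      have h0le : 0 ≤ (φ (y i + t • v) - φ (y i)) - t * ℓ := by
        rw [← hsum]
        have := sub_nonneg.mpr hmz
        rw [← Finset.sum_sub_distrib] at this
        calc (0:ℝ) ≤ ∑ j, (P i j * bregman φ gφ (y i + t • v) (x j)
              - P i j * bregman φ gφ (y i) (x j)) := this
          _ = ∑ j, P i j * (bregman φ gφ (y i + t • v) (x j) - bregman φ gφ (y i) (x j)) := by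
              refine Finset.sum_congr rfl fun j _ => by ring
      simp only []
      have h00 : y i + (0:ℝ) • v = y i := by simp
      rw [h00]
      linarith
    have hpos := deriv_nonneg_of_min_right hD hm
    calc (0:ℝ) ≤ ⟪gφ (y i), v⟫ - ℓ := hpos
      _ = (∑ j, P i j) * ⟪gφ (y i), v⟫ - ∑ j, P i j * ⟪gφ (x j), v⟫ := by rw [hrow i, one_mul]
      _ = ∑ j, P i j * (⟪gφ (y i), v⟫ - ⟪gφ (x j), v⟫) := by
          rw [Finset.sum_mul, ← Finset.sum_sub_distrib]
          refine Finset.sum_congr rfl fun j _ => by ring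
  -- three-point identity
  have expand : ∀ i j, bregman φ gφ u (x j) - bregman φ gφ u (y i) - bregman φ gφ (y i) (x j)
      = ⟪gφ (y i), u - y i⟫ - ⟪gφ (x j), u - y i⟫ := by
    intro i j
    simp only [bregman]
    rw [show u - x j = (u - y i) + (y i - x j) by abel, inner_add_right]
    ring
  rw [ge_iff_le, ← sub_nonneg]
  have h1 : ∑ i, bregman φ gφ u (x i) = ∑ i, ∑ j, P i j * bregman φ gφ u (x j) := by
    rw [Finset.sum_comm]
    refine Finset.sum_congr rfl fun j _ => ?_
    rw [← Finset.sum_mul, hcol j, one_mul]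
  have h2 : ∑ i, bregman φ gφ u (y i) = ∑ i, ∑ j, P i j * bregman φ gφ u (y i) := by
    refine Finset.sum_congr rfl fun i _ => ?_
    rw [← Finset.sum_mul, hrow i, one_mul]
  have hrewrite : ∑ i, (bregman φ gφ u (x i) - bregman φ gφ u (y i))
      - ∑ i, ∑ j, P i j * bregman φ gφ (y i) (x j)
      = ∑ i, ∑ j, P i j * (⟪gφ (y i), u - y i⟫ - ⟪gφ (x j), u - y i⟫) := by
    rw [Finset.sum_sub_distrib, h1, h2]
    rw [← Finset.sum_sub_distrib, ← Finset.sum_sub_distrib]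
    refine Finset.sum_congr rfl fun i _ => ?_
    rw [← Finset.sum_sub_distrib, ← Finset.sum_sub_distrib]
    refine Finset.sum_congr rfl fun j _ => ?_
    rw [← mul_sub, ← mul_sub, expand]
  rw [hrewrite]
  exact Finset.sum_nonneg fun i _ => key i
end
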